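/- For integers N > s ≥ 1 and r ≥ 0, we have C(N−s, r+1) + s·C(N−1−s, r) ≤ C(N, r+1). -/
import Mathlib

lemma choose_add_mul_le_aux (N r : ℕ) :
    ∀ s, s < N → (N - s).choose (r + 1) + s * (N - 1 - s).choose r ≤ N.choose (r + 1) := by
  intro s
  induction s with
  | zero => simp
  | succ s ih =>
    intro h
    have hsN : s < N := Nat.lt_of_succ_lt h
    have ih' := ih hsN
    have e1 : N - (s + 1) = N - 1 - s := by omega
    rw [e1]
    have pascal : (N - s).choose (r + 1)
        = (N - 1 - s).choose (r + 1) + (N - 1 - s).choose r := by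
      rw [show N - s = (N - 1 - s) + 1 from by omega, Nat.choose_succ_succ]
      exact Nat.add_comm _ _
    have hmono : (N - 1 - (s + 1)).choose r ≤ (N - 1 - s).choose r :=
      Nat.choose_le_choose r (by omega)
    calc (N - 1 - s).choose (r + 1) + (s + 1) * (N - 1 - (s + 1)).choose r
        = (N - 1 - s).choose (r + 1) + s * (N - 1 - (s + 1)).choose r
          + (N - 1 - (s + 1)).choose r := by ring
      _ ≤ (N - 1 - s).choose (r + 1) + s * (N - 1 - s).choose r
          + (N - 1 - s).choose r := by gcongr
      _ = (N - s).choose (r + 1) + s * (N - 1 - s).choose r := by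
            rw [pascal]; ring
      _ ≤ N.choose (r + 1) := ih'

/-- For integers `N > s ≥ 1` and `r ≥ 0`,
`C(N-s, r+1) + s * C(N-1-s, r) ≤ C(N, r+1)`. -/
theorem choose_add_mul_le (N s r : ℕ) (hs1 : 1 ≤ s) (hsN : s < N) :
    (N - s).choose (r + 1) + s * (N - 1 - s).choose r ≤ N.choose (r + 1) :=
  choose_add_mul_le_aux N r s hsN
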